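/- For any sequence (k_i)_{i∈ℤ} ⊂ ℤ ∪ {∞} for which there is an index i_0 with k_i = ∞ for all i < i_0, the 𝒪-submodule B = Σ_{i∈ℤ} 𝔭^{k_i} t^i of K((t)) is bounded for the higher topology; conversely, every bounded subset of K((t)) is contained in a submodule of this form. Hence these submodules form a basis of the Von-Neumann bornology of K((t)). -/

import Mathlib

/-!
Common setting: `K` is a characteristic-zero local field (a finite extension of `ℚ_p`)
with ring of integers `𝒪 = {c : K | ‖c‖ ≤ 1}`, maximal ideal `𝔭 = {c : K | ‖c‖ < 1}`,
residue field of cardinality `q` and the absolute value normalised by `‖π‖ = q⁻¹`.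
We formalise the two-dimensional local fields `K((t))` (as `LaurentSeries K`) and
`K{{t}}` (as the submodule `mixedCarrier K` of `ℤ → K`), their higher topologies, and
the relevant functional-analytic notions (lattices, seminorms, boundedness,
c-compactness, compactoidness, completeness for nets, duality).
-/

open Filter Topology Set Pointwise
open scoped Classical

noncomputable section

namespace TwoDimLF

variable (K : Type) [NontriviallyNormedField K]

/-- `K` is a characteristic-zero nonarchimedean local field: the norm is nonarchimedean,
takes the values `q^ℤ` on `K˟` (with a uniformizer of norm `q⁻¹`), `K` is complete, locally
compact, of characteristic zero, and the residue field has exactly `q` elements. -/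
structure IsCharZeroLocalField (q : ℕ) : Prop where
  nonarch : ∀ x y : K, ‖x + y‖ ≤ max ‖x‖ ‖y‖
  one_lt_q : 1 < q
  norm_values : ∀ x : K, x ≠ 0 → ∃ n : ℤ, ‖x‖ = (q : ℝ) ^ (-n)
  exists_uniformizer : ∃ π : K, ‖π‖ = ((q : ℝ))⁻¹
  charZero : CharZero K
  locallyCompact : LocallyCompactSpace K
  complete : CompleteSpace K
  residue_card : ∃ s : Finset K, s.card = q ∧
    ∀ x : K, ‖x‖ ≤ 1 → ∃! y, y ∈ s ∧ ‖x - y‖ < 1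

/-- The fractional ideal `𝔭^n ⊆ K` for `n ∈ ℤ ∪ {-∞}`, with the convention `𝔭^(-∞) = K`. -/
def pB (q : ℕ) (n : WithBot ℤ) : Set K :=
  WithBot.recBotCoe Set.univ (fun m : ℤ => {x : K | ‖x‖ ≤ (q : ℝ) ^ (-m)}) n

/-- The fractional ideal `𝔭^n ⊆ K` for `n ∈ ℤ ∪ {∞}`, with the convention `𝔭^∞ = {0}`. -/
def pT (q : ℕ) (n : WithTop ℤ) : Set K :=
  WithTop.recTopCoe {0} (fun m : ℤ => {x : K | ‖x‖ ≤ (q : ℝ) ^ (-m)}) n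

/-- The fractional ideal `𝔭^n ⊆ K` for `n ∈ ℤ ∪ {±∞}`. -/
def pE (q : ℕ) (n : WithBot (WithTop ℤ)) : Set K :=
  WithBot.recBotCoe Set.univ (fun m : WithTop ℤ => pT K q m) n

/-- `q ^ n ∈ ℝ` for `n ∈ ℤ ∪ {-∞}`, with the convention `q^(-∞) = 0`. -/
def qpow (q : ℕ) (n : WithBot ℤ) : ℝ :=
  WithBot.recBotCoe 0 (fun m : ℤ => (q : ℝ) ^ m) n

/-- `1 - k` for `k ∈ ℤ ∪ {±∞}` (so `1 - (±∞) = ∓∞`). -/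
def oneSubE : WithBot (WithTop ℤ) → WithBot (WithTop ℤ) :=
  WithBot.recBotCoe ((⊤ : WithTop ℤ) : WithBot (WithTop ℤ))
    (WithTop.recTopCoe (⊥ : WithBot (WithTop ℤ))
      (fun z : ℤ => (((1 - z : ℤ) : WithTop ℤ) : WithBot (WithTop ℤ))))

section LCS

variable {V : Type} [AddCommGroup V] [Module K V]

/-- `S` is an `𝒪`-submodule of the `K`-vector space `V`, where `𝒪 = {c : K | ‖c‖ ≤ 1}`
is the ring of integers of `K`. -/
def IsOSubmodule (S : Set V) : Prop :=
  (0 : V) ∈ S ∧ (∀ x ∈ S, ∀ y ∈ S, x + y ∈ S) ∧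
    ∀ c : K, ‖c‖ ≤ 1 → ∀ x ∈ S, c • x ∈ S

/-- `S` is an `𝒪`-lattice in `V`: an `𝒪`-submodule such that every vector is carried
into `S` by some nonzero scalar. -/
def IsLatticeSet (S : Set V) : Prop :=
  IsOSubmodule K S ∧ ∀ v : V, ∃ a : K, a ≠ 0 ∧ a • v ∈ S

/-- A (nonarchimedean) seminorm on the `K`-vector space `V`. -/
def IsSeminorm (N : V → ℝ) : Prop :=
  (∀ (c : K) (v : V), N (c • v) = ‖c‖ * N v) ∧ ∀ v w : V, N (v + w) ≤ max (N v) (N w)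

/-- The gauge seminorm of a lattice `Λ ⊆ V`: `‖v‖_Λ = inf {‖a‖ : v ∈ aΛ}`. -/
def gaugeSeminorm (Λ : Set V) (v : V) : ℝ :=
  sInf {r : ℝ | ∃ a : K, v ∈ a • Λ ∧ r = ‖a‖}

/-- The group topology on `W` determined by a family `B` of neighbourhoods of zero:
neighbourhoods of `x` are generated by the translates `x + U`, `U ∈ B`. -/
def addTopologyOf {W : Type} [AddCommGroup W] (B : Set (Set W)) : TopologicalSpace W :=
  TopologicalSpace.mkOfNhds fun x => Filter.map (fun v => x + v) (⨅ U ∈ B, Filter.principal U)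

/-- `B` is (Von-Neumann) bounded for the locally convex topology `τ`: every open lattice
absorbs it. -/
def IsVNBounded (τ : TopologicalSpace V) (B : Set V) : Prop :=
  ∀ Λ : Set V, IsLatticeSet K Λ → IsOpen[τ] Λ → ∃ a : K, B ⊆ a • Λ

/-- The `𝒪`-submodule `A ⊆ V` is c-compact: for every decreasing filtered family of open
lattices `L i`, the canonical map `A → lim A/(L i ∩ A)` is surjective (phrased via
compatible families of representatives). -/
def IsCCompact (τ : TopologicalSpace V) (A : Set V) : Prop :=
  ∀ (ι : Type) (L : ι → Set V),
    (∀ i, IsLatticeSet K (L i) ∧ IsOpen[τ] (L i)) →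
    (∀ i j, ∃ k, L k ⊆ L i ∧ L k ⊆ L j) →
    ∀ x : ι → V, (∀ i, x i ∈ A) →
      (∀ i j, L j ⊆ L i → x j - x i ∈ L i) →
      ∃ a ∈ A, ∀ i, a - x i ∈ L i

/-- The `𝒪`-submodule `A ⊆ V` is compactoid: for every open lattice `Λ` there are finitely
many vectors `v₁, …, v_m ∈ V` with `A ⊆ Λ + 𝒪v₁ + ⋯ + 𝒪v_m`. -/
def IsCompactoid (τ : TopologicalSpace V) (A : Set V) : Prop :=
  ∀ Λ : Set V, IsLatticeSet K Λ → IsOpen[τ] Λ →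
    ∃ (m : ℕ) (v : Fin m → V),
      A ⊆ {u : V | ∃ l ∈ Λ, ∃ c : Fin m → K, (∀ j, ‖c j‖ ≤ 1) ∧ u = l + ∑ j, c j • v j}

/-- `A ⊆ V` is complete: every Cauchy net with values in `A` converges to a point of `A`
(for the topology `τ`). -/
def IsNetComplete (τ : TopologicalSpace V) (A : Set V) : Prop :=
  ∀ (ι : Type) [Preorder ι] [Nonempty ι],
    (∀ i j : ι, ∃ k, i ≤ k ∧ j ≤ k) →
    ∀ x : ι → V, (∀ i, x i ∈ A) →
      (∀ U ∈ @nhds V τ 0, ∃ i0, ∀ j ≥ i0, ∀ k ≥ i0, x j - x k ∈ U) →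
      ∃ a ∈ A, Filter.Tendsto x Filter.atTop (@nhds V τ a)

/-- `τ` makes `V` a locally convex topological `K`-vector space: it is a vector-space
topology whose filter of neighbourhoods of zero admits a basis of lattices. -/
def IsLCTVS (τ : TopologicalSpace V) : Prop :=
  @IsTopologicalAddGroup V τ _ ∧ @ContinuousSMul K V _ _ τ ∧
    ∀ S ∈ @nhds V τ 0, ∃ Λ : Set V, IsLatticeSet K Λ ∧ Λ ∈ @nhds V τ 0 ∧ Λ ⊆ S

/-- The topological dual of `(V, τ)`: continuous `K`-linear forms, as a set of functions. -/
def dualSet (τ : TopologicalSpace V) : Set (V → K) :=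
  {l | IsLinearMap K l ∧ @Continuous V K τ _ l}

/-- Basic neighbourhoods of zero for the `c`-topology on `V → K`: uniform convergence on
compactoid `𝒪`-submodules. -/
def cTopBasic (τ : TopologicalSpace V) : Set (Set (V → K)) :=
  {S | ∃ (B : Set V) (ε : ℝ), IsOSubmodule K B ∧ IsCompactoid K τ B ∧ 0 < ε ∧
    S = {l : V → K | ∀ x ∈ B, ‖l x‖ ≤ ε}}

/-- The `c`-topology (uniform convergence on compactoid `𝒪`-submodules) on `V → K`. -/
def cTop (τ : TopologicalSpace V) : TopologicalSpace (V → K) :=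
  addTopologyOf (cTopBasic K τ)

/-- The pseudo-polar `A^p = {l ∈ V' : |l(v)| < 1 for all v ∈ A}`. -/
def pseudoPolar (τ : TopologicalSpace V) (A : Set V) : Set (V → K) :=
  {l | l ∈ dualSet K τ ∧ ∀ v ∈ A, ‖l v‖ < 1}

/-- The pseudo-bipolar `A^{pp} = {v ∈ V : |l(v)| < 1 for all l ∈ A^p}`. -/
def pseudoBipolar (τ : TopologicalSpace V) (A : Set V) : Set V :=
  {v | ∀ l ∈ pseudoPolar K τ A, ‖l v‖ < 1}

end LCS

/-! ### The equal characteristic field `K((t))` -/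

/-- Basic neighbourhoods of zero for the higher topology on `K((t))`:
`Σ U_i t^i` where each `U_i` is an open neighbourhood of `0` in `K` and `U_i = K` for all
sufficiently large `i`. -/
def laurentBasic : Set (Set (LaurentSeries K)) :=
  {S | ∃ U : ℤ → Set K, (∀ i, IsOpen (U i) ∧ (0 : K) ∈ U i) ∧
    (∃ N : ℤ, ∀ i, N ≤ i → U i = Set.univ) ∧
    S = {f : LaurentSeries K | ∀ i, f.coeff i ∈ U i}}

/-- The higher topology on `K((t))`. -/
def laurentTop : TopologicalSpace (LaurentSeries K) := addTopologyOf (laurentBasic K)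

/-- `Λ = Σ_{i∈ℤ} 𝔭^{n_i} t^i ⊆ K((t))` for a sequence `(n_i) ⊆ ℤ ∪ {-∞}`. -/
def laurentLambda (q : ℕ) (n : ℤ → WithBot ℤ) : Set (LaurentSeries K) :=
  {f | ∀ i, f.coeff i ∈ pB K q (n i)}

/-- `B = Σ_{i∈ℤ} 𝔭^{k_i} t^i ⊆ K((t))` for a sequence `(k_i) ⊆ ℤ ∪ {∞}`. -/
def laurentPT (q : ℕ) (k : ℤ → WithTop ℤ) : Set (LaurentSeries K) :=
  {f | ∀ i, f.coeff i ∈ pT K q (k i)}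

/-- `A = Σ_{i∈ℤ} 𝔭^{k_i} t^i ⊆ K((t))` for a sequence `(k_i) ⊆ ℤ ∪ {±∞}`. -/
def laurentPE (q : ℕ) (k : ℤ → WithBot (WithTop ℤ)) : Set (LaurentSeries K) :=
  {f | ∀ i, f.coeff i ∈ pE K q (k i)}

/-- The admissible seminorm `‖Σ x_i t^i‖ = max_i ‖x_i‖ q^{n_i}` on `K((t))`. -/
def laurentSeminorm (q : ℕ) (n : ℤ → WithBot ℤ) (f : LaurentSeries K) : ℝ :=
  sSup {r : ℝ | ∃ i : ℤ, r = ‖f.coeff i‖ * qpow q (n i)}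

/-- The ring of integers `K[[t]] ⊆ K((t))`. -/
def laurentIntegers : Set (LaurentSeries K) := {f | ∀ i, i < 0 → f.coeff i = 0}

/-- The rank-two ring of integers `𝒪 + tK[[t]] ⊆ K((t))`. -/
def laurentRankTwo : Set (LaurentSeries K) :=
  {f | (∀ i, i < 0 → f.coeff i = 0) ∧ ‖f.coeff 0‖ ≤ 1}

/-- The pairing `γ(x)(y) = π₀(xy) = Σ_i x_i y_{-i}` on `K((t))`. -/
def laurentPairing (x y : LaurentSeries K) : K := ∑' i : ℤ, x.coeff i * y.coeff (-i)

/-! ### The mixed characteristic field `K{{t}}` -/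

/-- The underlying `K`-vector space of `K{{t}}`: functions `x : ℤ → K` (coefficients of
`Σ x_i t^i`) with `inf_i v_K(x_i) > -∞` (i.e. bounded norms) and `x_i → 0` as `i → -∞`. -/
def mixedCarrier : Submodule K (ℤ → K) where
  carrier := {x | (∃ C : ℝ, ∀ i, ‖x i‖ ≤ C) ∧ Filter.Tendsto x Filter.atBot (nhds (0 : K))}
  zero_mem' := ⟨⟨0, fun i => by simp⟩, tendsto_const_nhds⟩
  add_mem' := by
    rintro x y ⟨⟨C, hC⟩, hx⟩ ⟨⟨D, hD⟩, hy⟩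
    refine ⟨⟨C + D, fun i => (norm_add_le _ _).trans (add_le_add (hC i) (hD i))⟩, ?_⟩
    exact (by simpa using hx.add hy : Filter.Tendsto (fun i => x i + y i) Filter.atBot (nhds (0 : K)))
  smul_mem' := by
    rintro c x ⟨⟨C, hC⟩, hx⟩
    refine ⟨⟨‖c‖ * C, fun i => ?_⟩, ?_⟩
    · have h : ‖(c • x) i‖ = ‖c‖ * ‖x i‖ := by simp [norm_smul]
      rw [h]
      exact mul_le_mul_of_nonneg_left (hC i) (norm_nonneg c)
    · have h2 := hx.const_smul c
      rw [smul_zero] at h2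
      exact h2

/-- The field `K{{t}}`, as a `K`-vector space. -/
abbrev Mt := ↥(mixedCarrier K)

/-- Basic neighbourhoods of zero for the higher topology on `K{{t}}`:
`Σ V_i t^i` where each `V_i` is an open neighbourhood of `0` in `K`, some `𝔭^c` is
contained in every `V_i`, and for every `l` eventually `𝔭^l ⊆ V_i`. -/
def mixedBasic (q : ℕ) : Set (Set (Mt K)) :=
  {S | ∃ Vs : ℤ → Set K, (∀ i, IsOpen (Vs i) ∧ (0 : K) ∈ Vs i) ∧
    (∃ c : ℤ, ∀ i, {x : K | ‖x‖ ≤ (q : ℝ) ^ (-c)} ⊆ Vs i) ∧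
    (∀ l : ℤ, ∃ i0 : ℤ, ∀ i, i0 ≤ i → {x : K | ‖x‖ ≤ (q : ℝ) ^ (-l)} ⊆ Vs i) ∧
    S = {f : Mt K | ∀ i, f.1 i ∈ Vs i}}

/-- The higher topology on `K{{t}}`. -/
def mixedTop (q : ℕ) : TopologicalSpace (Mt K) := addTopologyOf (mixedBasic K q)

/-- `Λ = Σ_{i∈ℤ} 𝔭^{n_i} t^i ⊆ K{{t}}` for a sequence `(n_i) ⊆ ℤ ∪ {-∞}`. -/
def mixedLambda (q : ℕ) (n : ℤ → WithBot ℤ) : Set (Mt K) :=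
  {f | ∀ i, f.1 i ∈ pB K q (n i)}

/-- `B = Σ_{i∈ℤ} 𝔭^{k_i} t^i ⊆ K{{t}}` for a sequence `(k_i) ⊆ ℤ ∪ {∞}`. -/
def mixedPT (q : ℕ) (k : ℤ → WithTop ℤ) : Set (Mt K) :=
  {f | ∀ i, f.1 i ∈ pT K q (k i)}

/-- `A = Σ_{i∈ℤ} 𝔭^{k_i} t^i ⊆ K{{t}}` for a sequence `(k_i) ⊆ ℤ ∪ {±∞}`. -/
def mixedPE (q : ℕ) (k : ℤ → WithBot (WithTop ℤ)) : Set (Mt K) :=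
  {f | ∀ i, f.1 i ∈ pE K q (k i)}

/-- The admissible seminorm `‖Σ x_i t^i‖ = sup_i ‖x_i‖ q^{n_i}` on `K{{t}}`. -/
def mixedSeminorm (q : ℕ) (n : ℤ → WithBot ℤ) (f : Mt K) : ℝ :=
  sSup {r : ℝ | ∃ i : ℤ, r = ‖f.1 i‖ * qpow q (n i)}

/-- The ring of integers `𝒪{{t}} ⊆ K{{t}}`. -/
def mixedIntegers : Set (Mt K) := {f | ∀ i, ‖f.1 i‖ ≤ 1}

/-- The rank-two ring of integers `Σ_{i<0} 𝔭 t^i + Σ_{i≥0} 𝒪 t^i ⊆ K{{t}}`. -/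
def mixedRankTwo (q : ℕ) : Set (Mt K) :=
  {f | (∀ i : ℤ, i < 0 → ‖f.1 i‖ ≤ ((q : ℝ))⁻¹) ∧ ∀ i : ℤ, 0 ≤ i → ‖f.1 i‖ ≤ 1}

/-- The monomial `t^i ∈ K{{t}}`. -/
def mixedT (i : ℤ) : Mt K :=
  ⟨fun j => if j = i then 1 else 0,
    ⟨⟨1, fun j => by by_cases h : j = i <;> simp [h]⟩, by
      refine (tendsto_const_nhds : Filter.Tendsto (fun _ : ℤ => (0 : K))
        Filter.atBot (nhds 0)).congr' ?_
      filter_upwards [Filter.eventually_le_atBot (i - 1)] with j hj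
      have h : j ≠ i := by omega
      simp [h]⟩⟩

/-- Coefficients of the product of two elements of `K{{t}}` (Cauchy product). -/
def mixedMulCoeff (x y : Mt K) : ℤ → K := fun k => ∑' i : ℤ, x.1 i * y.1 (k - i)

/-- Multiplication on `K{{t}}`. -/
def mixedMul (x y : Mt K) : Mt K :=
  if h : mixedMulCoeff K x y ∈ mixedCarrier K then ⟨_, h⟩ else 0

/-- The pairing `γ(x)(y) = π₀(xy) = Σ_i x_i y_{-i}` on `K{{t}}`. -/
def mixedPairing (x y : Mt K) : K := ∑' i : ℤ, x.1 i * y.1 (-i)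


section Aux7

variable {K : Type} [NontriviallyNormedField K]

lemma pB_bot' (q : ℕ) : pB K q ⊥ = Set.univ := rfl

lemma pB_coe' (q : ℕ) (m : ℤ) :
    pB K q (m : WithBot ℤ) = {x : K | ‖x‖ ≤ (q : ℝ) ^ (-m)} := rfl

lemma pT_top' (q : ℕ) : pT K q ⊤ = ({0} : Set K) := rfl

lemma pT_coe' (q : ℕ) (m : ℤ) :
    pT K q (m : WithTop ℤ) = {x : K | ‖x‖ ≤ (q : ℝ) ^ (-m)} := rfl

lemma zero_mem_pB {q : ℕ} (hq : 1 < q) (n : WithBot ℤ) : (0 : K) ∈ pB K q n := by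
  cases n with
  | bot => exact Set.mem_univ _
  | coe m =>
      rw [pB_coe']
      have : (0:ℝ) < (q : ℝ) ^ (-m) :=
        zpow_pos (by exact_mod_cast Nat.lt_of_lt_of_le Nat.zero_lt_one hq.le) _
      simpa using this.le

lemma add_mem_pB {q : ℕ} (nonarch : ∀ x y : K, ‖x + y‖ ≤ max ‖x‖ ‖y‖)
    {n : WithBot ℤ} {x y : K} (hx : x ∈ pB K q n) (hy : y ∈ pB K q n) :
    x + y ∈ pB K q n := by
  cases n with
  | bot => exact Set.mem_univ _
  | coe m =>
      rw [pB_coe'] at *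
      exact (nonarch x y).trans (max_le hx hy)

lemma smul_mem_pB {q : ℕ} {n : WithBot ℤ} {c x : K} (hc : ‖c‖ ≤ 1)
    (hx : x ∈ pB K q n) : c • x ∈ pB K q n := by
  cases n with
  | bot => exact Set.mem_univ _
  | coe m =>
      rw [pB_coe'] at *
      have : ‖c • x‖ = ‖c‖ * ‖x‖ := by simp [norm_smul]
      rw [Set.mem_setOf_eq, this]
      calc ‖c‖ * ‖x‖ ≤ 1 * ‖x‖ := by
            exact mul_le_mul_of_nonneg_right hc (norm_nonneg _)
        _ = ‖x‖ := one_mul _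
        _ ≤ _ := hx

lemma isOpen_pB {q : ℕ} (hq : 1 < q) (nonarch : ∀ x y : K, ‖x + y‖ ≤ max ‖x‖ ‖y‖)
    (n : WithBot ℤ) : IsOpen (pB K q n) := by
  cases n with
  | bot => exact isOpen_univ
  | coe m =>
      rw [pB_coe', Metric.isOpen_iff]
      intro x hx
      have hpos : (0:ℝ) < (q : ℝ) ^ (-m) :=
        zpow_pos (by exact_mod_cast Nat.lt_of_lt_of_le Nat.zero_lt_one hq.le) _
      refine ⟨(q : ℝ) ^ (-m), hpos, fun y hy => ?_⟩
      have hdist : ‖y - x‖ < (q : ℝ) ^ (-m) := by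
        simpa [dist_eq_norm] using hy
      have : ‖y‖ ≤ max ‖y - x‖ ‖x‖ := by
        simpa using nonarch (y - x) x
      exact this.trans (max_le hdist.le hx)

/-- Every open set of the higher topology containing `0` contains a basic set. -/
lemma exists_basic_subset {Λ : Set (LaurentSeries K)}
    (hΛ : IsOpen[laurentTop K] Λ) (h0 : (0 : LaurentSeries K) ∈ Λ) :
    ∃ V ∈ laurentBasic K, V ⊆ Λ := by
  have h := hΛ 0 h0
  rw [Filter.mem_map] at h
  have h' : Λ ∈ ⨅ U ∈ laurentBasic K, Filter.principal U := by
    have : (fun v => (0 : LaurentSeries K) + v) ⁻¹' Λ = Λ := by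
      ext v; simp
    rwa [this] at h
  have hdir : DirectedOn ((Filter.principal ⁻¹'o fun x1 x2 => x1 ≥ x2))
      (laurentBasic K) := by
    rintro U ⟨Us, hUs, ⟨NU, hNU⟩, rfl⟩ V ⟨Vs, hVs, ⟨NV, hNV⟩, rfl⟩
    refine ⟨{f : LaurentSeries K | ∀ i, f.coeff i ∈ Us i ∩ Vs i}, ?_, ?_, ?_⟩
    · refine ⟨fun i => Us i ∩ Vs i,
        fun i => ⟨(hUs i).1.inter (hVs i).1, (hUs i).2, (hVs i).2⟩,
        ⟨max NU NV, fun i hi => ?_⟩, rfl⟩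
      show Us i ∩ Vs i = Set.univ
      rw [hNU i (le_trans (le_max_left _ _) hi), hNV i (le_trans (le_max_right _ _) hi)]
      simp
    · exact Filter.principal_mono.2 fun f hf i => (hf i).1
    · exact Filter.principal_mono.2 fun f hf i => (hf i).2
  have hne : (laurentBasic K).Nonempty := by
    refine ⟨Set.univ, fun _ => Set.univ, fun i => ⟨isOpen_univ, trivial⟩, ⟨0, fun _ _ => rfl⟩, ?_⟩
    ext f; simp
  obtain ⟨V, hV, hVΛ⟩ := (Filter.mem_biInf_of_directed hdir hne).1 h'
  exact ⟨V, hV, Filter.mem_principal.1 hVΛ⟩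

/-- `laurentLambda K q n` with `n i = ⊥` for large `i` is an open lattice. -/
lemma laurentLambda_isOpenLattice {q : ℕ} (hq : 1 < q)
    (nonarch : ∀ x y : K, ‖x + y‖ ≤ max ‖x‖ ‖y‖)
    (π : K) (hπ : ‖π‖ = ((q : ℝ))⁻¹)
    (n : ℤ → WithBot ℤ) (N : ℤ) (hN : ∀ i, N ≤ i → n i = ⊥) :
    IsLatticeSet K (laurentLambda K q n) ∧
      IsOpen[laurentTop K] (laurentLambda K q n) := by
  have hq1 : (1:ℝ) < (q : ℝ) := by exact_mod_cast hq
  have hq0 : (0:ℝ) < (q : ℝ) := lt_trans one_pos hq1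
  have hπ0 : π ≠ 0 := by
    intro h
    rw [h, norm_zero] at hπ
    exact absurd hπ.symm (by positivity)
  constructor
  · refine ⟨⟨fun i => by simpa using zero_mem_pB hq (n i),
      fun x hx y hy i => by
        rw [laurentLambda, Set.mem_setOf_eq] at *
        simpa [HahnSeries.coeff_add] using add_mem_pB nonarch (hx i) (hy i),
      fun c hc x hx i => by
        rw [laurentLambda, Set.mem_setOf_eq] at *
        simpa [HahnSeries.coeff_smul] using smul_mem_pB hc (hx i)⟩, ?_⟩
    intro v
    -- choose, for every `i`, an exponent killing the constraint at `i`
    have key : ∀ i : ℤ, ∃ M : ℕ, ∀ m : ℤ, n i = (m : WithBot ℤ) →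
        ‖v.coeff i‖ * ((q : ℝ))⁻¹ ^ M ≤ (q : ℝ) ^ (-m) := by
      intro i
      cases hni : n i with
      | bot => exact ⟨0, fun m hm => by simp at hm⟩
      | coe m0 =>
          by_cases hv : v.coeff i = 0
          · refine ⟨0, fun m hm => ?_⟩
            simp only [hv, norm_zero, zero_mul]
            positivity
          · have hvpos : (0:ℝ) < ‖v.coeff i‖ := norm_pos_iff.2 hv
            obtain ⟨M, hM⟩ := exists_pow_lt_of_lt_one
              (show (0:ℝ) < (q : ℝ) ^ (-m0) / ‖v.coeff i‖ by positivity)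
              (show ((q:ℝ))⁻¹ < 1 by rw [inv_lt_one_iff₀]; right; exact hq1)
            refine ⟨M, fun m hm => ?_⟩
            obtain rfl : m0 = m := WithBot.coe_injective hm
            calc ‖v.coeff i‖ * ((q : ℝ))⁻¹ ^ M
                ≤ ‖v.coeff i‖ * ((q : ℝ) ^ (-m0) / ‖v.coeff i‖) :=
                  mul_le_mul_of_nonneg_left hM.le (norm_nonneg _)
              _ = (q : ℝ) ^ (-m0) := by field_simp
    choose g hg using key
    set b : ℤ := v.order with hb
    set M : ℕ := (Finset.Ico b N).sup g with hM
    refine ⟨π ^ M, pow_ne_zero _ hπ0, fun i => ?_⟩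
    have hcoeff : (π ^ M • v).coeff i = π ^ M * v.coeff i := by
      simp [HahnSeries.coeff_smul, smul_eq_mul]
    cases hni : n i with
    | bot => simp [hcoeff, hni, pB_bot']
    | coe m =>
        rw [hcoeff, pB_coe', Set.mem_setOf_eq]
        by_cases hv : v.coeff i = 0
        · simp only [hv, mul_zero, norm_zero]
          positivity
        · have hiN : i < N := by
            by_contra hcon
            rw [hN i (not_lt.1 hcon)] at hni
            exact absurd hni (by simp)
          have hib : b ≤ i := by
            by_contra hcon
            exact hv (HahnSeries.coeff_eq_zero_of_lt_order (not_le.1 hcon))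
          have hmem : i ∈ Finset.Ico b N := Finset.mem_Ico.2 ⟨hib, hiN⟩
          have hgM : g i ≤ M := Finset.le_sup hmem
          have hmono : ((q:ℝ))⁻¹ ^ M ≤ ((q:ℝ))⁻¹ ^ g i :=
            pow_le_pow_of_le_one (by positivity) (by
              rw [inv_le_one_iff₀]; right; exact hq1.le) hgM
          have hnorm : ‖π ^ M * v.coeff i‖ = ‖v.coeff i‖ * ((q:ℝ))⁻¹ ^ M := by
            rw [norm_mul, norm_pow, hπ, mul_comm]
          rw [hnorm]
          calc ‖v.coeff i‖ * ((q:ℝ))⁻¹ ^ M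
              ≤ ‖v.coeff i‖ * ((q:ℝ))⁻¹ ^ g i :=
                mul_le_mul_of_nonneg_left hmono (norm_nonneg _)
            _ ≤ (q : ℝ) ^ (-m) := hg i m hni
  · -- openness
    intro x hx
    rw [Filter.mem_map]
    refine Filter.mem_iInf_of_mem (laurentLambda K q n) ?_
    refine Filter.mem_iInf_of_mem ?_ ?_
    · refine ⟨fun i => pB K q (n i), fun i => ⟨isOpen_pB hq nonarch _, zero_mem_pB hq _⟩,
        ⟨N, fun i hi => by show pB K q (n i) = Set.univ; rw [hN i hi, pB_bot']⟩, rfl⟩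
    · rw [Filter.mem_principal]
      intro f hf
      simp only [Set.mem_preimage]
      intro i
      simpa [HahnSeries.coeff_add] using add_mem_pB nonarch (hx i) (hf i)

end Aux7

/-- For any sequence `(k_i) ⊆ ℤ ∪ {∞}` with `k_i = ∞` for all `i` below some
index `i0`, the `𝒪`-submodule `B = Σ_{i∈ℤ} 𝔭^{k_i} t^i ⊆ K((t))` is bounded for the higher
topology; conversely every bounded subset of `K((t))` is contained in a submodule of this
form. Hence these submodules form a basis of the Von-Neumann bornology of `K((t))`. -/
theorem statement7 (q : ℕ) (hK : IsCharZeroLocalField K q) :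
    (∀ k : ℤ → WithTop ℤ, (∃ i0 : ℤ, ∀ i : ℤ, i < i0 → k i = ⊤) →
      IsVNBounded K (laurentTop K) (laurentPT K q k)) ∧
    (∀ B : Set (LaurentSeries K), IsVNBounded K (laurentTop K) B →
      ∃ k : ℤ → WithTop ℤ, (∃ i0 : ℤ, ∀ i : ℤ, i < i0 → k i = ⊤) ∧
        B ⊆ laurentPT K q k) := by
  obtain ⟨π, hπ⟩ := hK.exists_uniformizer
  have hq := hK.one_lt_q
  have nonarch := hK.nonarch
  have hq1 : (1:ℝ) < (q:ℝ) := by exact_mod_cast hq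
  have hq0 : (0:ℝ) < (q:ℝ) := lt_trans one_pos hq1
  have hπ0 : π ≠ 0 := by
    intro h
    rw [h, norm_zero] at hπ
    exact absurd hπ.symm (by positivity)
  have hqinv1 : ((q:ℝ))⁻¹ < 1 := by rw [inv_lt_one_iff₀]; right; exact hq1
  have hinvpow : ∀ M : ℕ, ((q:ℝ))⁻¹ ^ M = (q:ℝ) ^ (-(M:ℤ)) := by
    intro M; rw [inv_pow, ← zpow_natCast, ← zpow_neg]
  constructor
  · -- Part 1 : each `laurentPT` with eventually-`⊤` exponents is bounded
    rintro k ⟨i0, hk⟩ Λ hΛlat hΛopen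
    obtain ⟨V, hVb, hVΛ⟩ := exists_basic_subset hΛopen (hΛlat.1.1)
    obtain ⟨U, hU, ⟨N, hNuniv⟩, rfl⟩ := hVb
    have hball : ∀ i : ℤ, ∃ m : ℤ, {x : K | ‖x‖ ≤ (q:ℝ) ^ (-m)} ⊆ U i := by
      intro i
      obtain ⟨ε, hε, hsub⟩ := Metric.isOpen_iff.1 (hU i).1 0 (hU i).2
      obtain ⟨m, hm⟩ := exists_pow_lt_of_lt_one hε hqinv1
      refine ⟨(m:ℤ), fun x hx => hsub ?_⟩
      rw [Metric.mem_ball, dist_zero_right]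
      calc ‖x‖ ≤ (q:ℝ) ^ (-(m:ℤ)) := hx
        _ = ((q:ℝ))⁻¹ ^ m := (hinvpow m).symm
        _ < ε := hm
    choose m hm using hball
    have hMex : ∀ i : ℤ, ∃ M : ℕ, ∀ c : ℤ, k i = (c : WithTop ℤ) →
        (q:ℝ) ^ (-(M:ℤ)) * (q:ℝ) ^ (-c) ≤ (q:ℝ) ^ (-(m i)) := by
      intro i
      cases hki : k i with
      | top => exact ⟨0, fun c hc => by simp at hc⟩
      | coe c0 =>
          refine ⟨(m i - c0).toNat, fun c hc => ?_⟩
          obtain rfl : c0 = c := WithTop.coe_injective hc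
          rw [← zpow_add₀ (ne_of_gt hq0)]
          apply zpow_le_zpow_right₀ hq1.le
          omega
    choose M hM using hMex
    set Mb : ℕ := (Finset.Ico i0 N).sup M with hMb
    refine ⟨(π ^ Mb)⁻¹, fun f hf => ?_⟩
    rw [Set.mem_smul_set_iff_inv_smul_mem₀ (inv_ne_zero (pow_ne_zero _ hπ0))]
    apply hVΛ
    rw [inv_inv]
    intro i
    have hcoeff : ((π ^ Mb) • f).coeff i = π ^ Mb * f.coeff i := by
      simp [HahnSeries.coeff_smul, smul_eq_mul]
    rw [hcoeff]
    by_cases hiN : N ≤ i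
    · rw [hNuniv i hiN]; trivial
    cases hki : k i with
    | top =>
        have hz : f.coeff i = 0 := by
          have := hf i
          rw [hki, pT_top', Set.mem_singleton_iff] at this
          exact this
        rw [hz, mul_zero]
        exact (hU i).2
    | coe c =>
        have hii0 : i0 ≤ i := by
          by_contra hcon
          rw [hk i (not_le.1 hcon)] at hki
          exact absurd hki (by simp)
        have hfc : ‖f.coeff i‖ ≤ (q:ℝ) ^ (-c) := by
          have := hf i
          rw [hki, pT_coe'] at this
          exact this
        have hMt : M i ≤ Mb := Finset.le_sup (Finset.mem_Ico.2 ⟨hii0, not_le.1 hiN⟩)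
        apply hm i
        show ‖π ^ Mb * f.coeff i‖ ≤ (q:ℝ) ^ (-(m i))
        rw [norm_mul, norm_pow, hπ]
        calc ((q:ℝ))⁻¹ ^ Mb * ‖f.coeff i‖
            ≤ ((q:ℝ))⁻¹ ^ Mb * (q:ℝ) ^ (-c) :=
              mul_le_mul_of_nonneg_left hfc (by positivity)
          _ ≤ ((q:ℝ))⁻¹ ^ (M i) * (q:ℝ) ^ (-c) := by
              refine mul_le_mul_of_nonneg_right ?_ (by positivity)
              exact pow_le_pow_of_le_one (by positivity)
                (by rw [inv_le_one_iff₀]; right; exact hq1.le) hMt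
          _ = (q:ℝ) ^ (-(M i : ℤ)) * (q:ℝ) ^ (-c) := by rw [hinvpow]
          _ ≤ (q:ℝ) ^ (-(m i)) := hM i c hki
  · -- Part 2 : every bounded set is contained in some `laurentPT`
    rintro B hB
    -- coefficientwise bounds
    have hcoefb : ∀ i : ℤ, ∃ c : ℤ, ∀ f ∈ B, ‖f.coeff i‖ ≤ (q:ℝ) ^ (-c) := by
      intro i
      obtain ⟨hlat, hopen⟩ := laurentLambda_isOpenLattice (K := K) hq nonarch π hπ
        (fun j => if j = i then ((0:ℤ) : WithBot ℤ) else ⊥) (i+1)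
        (fun j hj => by simp [show j ≠ i by omega])
      obtain ⟨a, ha⟩ := hB _ hlat hopen
      obtain ⟨Mi, hMi⟩ := pow_unbounded_of_one_lt ‖a‖ hq1
      refine ⟨-(Mi:ℤ), fun f hf => ?_⟩
      obtain ⟨g, hg, rfl⟩ := ha hf
      have hgi : ‖g.coeff i‖ ≤ 1 := by
        have h : g.coeff i ∈ pB K q ((0:ℤ) : WithBot ℤ) := by simpa using hg i
        rw [pB_coe'] at h
        simpa using h
      have hcof : ‖(a • g).coeff i‖ = ‖a‖ * ‖g.coeff i‖ := by
        rw [HahnSeries.coeff_smul, norm_smul]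
      rw [hcof, neg_neg]
      calc ‖a‖ * ‖g.coeff i‖ ≤ ‖a‖ * 1 :=
            mul_le_mul_of_nonneg_left hgi (norm_nonneg _)
        _ = ‖a‖ := mul_one _
        _ ≤ (q:ℝ) ^ (Mi:ℤ) := by
              rw [zpow_natCast]; exact hMi.le
    -- uniform lower bound on the support
    have hstepA : ∃ i0 : ℤ, ∀ i : ℤ, i < i0 → ∀ f ∈ B, f.coeff i = 0 := by
      by_contra hcon
      push_neg at hcon
      have hsel : ∀ i : ℤ, ∃ nb : WithBot ℤ, (0 ≤ i → nb = ⊥) ∧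
          ((i < 0 ∧ ∃ f ∈ B, f.coeff i ≠ 0) → ∃ ms : ℤ, nb = (ms : WithBot ℤ) ∧
            ∃ f ∈ B, (q:ℝ) ^ (-ms) * (q:ℝ) ^ (-i) ≤ ‖f.coeff i‖) := by
        intro i
        by_cases hi : 0 ≤ i
        · exact ⟨⊥, fun _ => rfl, fun h => absurd hi (not_le.2 h.1)⟩
        · by_cases hex : ∃ f ∈ B, f.coeff i ≠ 0
          · obtain ⟨f, hfB, hf0⟩ := hex
            obtain ⟨c, hc⟩ := hK.norm_values _ hf0
            refine ⟨((c - i : ℤ) : WithBot ℤ), fun h => absurd h hi,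
              fun _ => ⟨c - i, rfl, f, hfB, ?_⟩⟩
            rw [hc, ← zpow_add₀ (ne_of_gt hq0)]
            apply le_of_eq
            congr 1
            ring
          · exact ⟨⊥, fun _ => rfl, fun h => absurd h.2 hex⟩
      choose n hn1 hn2 using hsel
      obtain ⟨hlat, hopen⟩ := laurentLambda_isOpenLattice (K := K) hq nonarch π hπ n 0
        (fun i hi => hn1 i hi)
      obtain ⟨a, ha⟩ := hB _ hlat hopen
      obtain ⟨Ma, hMa⟩ := pow_unbounded_of_one_lt ‖a‖ hq1
      obtain ⟨i, hilt, f, hfB, hf0⟩ := hcon (min 0 (-(Ma:ℤ)))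
      have hi0 : i < 0 := lt_of_lt_of_le hilt (min_le_left _ _)
      obtain ⟨ms, hnim, f', hf'B, hf'ge⟩ := hn2 i ⟨hi0, f, hfB, hf0⟩
      obtain ⟨g, hg, rfl⟩ := ha hf'B
      have hgi : ‖g.coeff i‖ ≤ (q:ℝ) ^ (-ms) := by
        have h := hg i
        rw [hnim, pB_coe'] at h
        exact h
      have hcof : ‖(a • g).coeff i‖ = ‖a‖ * ‖g.coeff i‖ := by
        rw [HahnSeries.coeff_smul, norm_smul]
      have hp : (0:ℝ) < (q:ℝ) ^ (-ms) := zpow_pos hq0 _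
      have h1 : (q:ℝ) ^ (-ms) * (q:ℝ) ^ (-i) ≤ ‖a‖ * (q:ℝ) ^ (-ms) := by
        refine le_trans hf'ge ?_
        rw [hcof]
        exact mul_le_mul_of_nonneg_left hgi (norm_nonneg a)
      have h2 : (q:ℝ) ^ (-i) ≤ ‖a‖ := by
        rw [mul_comm ‖a‖ ((q:ℝ) ^ (-ms))] at h1
        exact le_of_mul_le_mul_left h1 hp
      have h3 : ‖a‖ < (q:ℝ) ^ ((Ma:ℤ)) := by
        rw [zpow_natCast]; exact hMa
      have h4 : (q:ℝ) ^ ((Ma:ℤ)) ≤ (q:ℝ) ^ (-i) := by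
        apply zpow_le_zpow_right₀ hq1.le
        have : i < -(Ma:ℤ) := lt_of_lt_of_le hilt (min_le_right _ _)
        omega
      linarith
    obtain ⟨i0, hi0⟩ := hstepA
    choose c hc using hcoefb
    refine ⟨fun i => if i < i0 then (⊤ : WithTop ℤ) else ((c i : ℤ) : WithTop ℤ),
      ⟨i0, fun i hi => if_pos hi⟩, ?_⟩
    intro f hf i
    by_cases hi : i < i0
    · simp only [if_pos hi, pT_top', Set.mem_singleton_iff]
      exact hi0 i hi f hf
    · simp only [if_neg hi, pT_coe']
      exact hc i f hf

end TwoDimLF
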